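/- Let b ∈ ℝ, σ ≥ 0, n ≥ 0, and let g ∈ C^{2n+2}(ℝ) be such that there exist constants M < ∞ and c > 0 with |g^{(i)}(y)| ≤ M e^{c|y|} for all 0 ≤ i ≤ 2n+2 and all y ∈ ℝ. Let Lg := b g' + (σ²/2) g'' with iterates L⁰g = g, L^{k+1}g = L(L^k g), and for t > 0 let 𝒩(bt, σ²t) denote the Gaussian measure on ℝ with mean bt and variance σ²t. Then for every t > 0: ∫ g d𝒩(bt, σ²t) = g(0) + Σ_{k=1}^{n} (t^k/k!) (L^k g)(0) + (t^{n+1}/n!) ∫₀¹ (1−α)^n [ ∫ (L^{n+1} g) d𝒩(bαt, σ²αt) ] dα. -/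

import Mathlib

open MeasureTheory ProbabilityTheory intervalIntegral
open Real Set Filter
open scoped NNReal ENNReal

/-- The generator `Lg = b g' + (σ²/2) g''` of Brownian motion with drift. -/
noncomputable def driftGen (b σ : ℝ) (g : ℝ → ℝ) : ℝ → ℝ :=
  fun x => b * deriv g x + σ ^ 2 / 2 * deriv (deriv g) x

lemma expb_integrable (m : ℝ) (v : ℝ≥0) (K d : ℝ) :
    Integrable (fun y => K * Real.exp (d * |y|)) (gaussianReal m v) := by
  by_cases hv : v = 0
  · subst hv
    rw [gaussianReal_zero_var]
    exact (integrable_const _).congr (MeasureTheory.ae_eq_dirac _).symm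
  · rw [gaussianReal_of_var_ne_zero m hv,
      MeasureTheory.integrable_withDensity_iff (measurable_gaussianPDF m v)
        (Eventually.of_forall fun x => ENNReal.ofReal_lt_top)]
    have hvpos : (0:ℝ) < (v:ℝ) := by
      exact_mod_cast pos_iff_ne_zero.mpr hv
    set w : ℝ := (v:ℝ) with hw
    have hwne : w ≠ 0 := ne_of_gt hvpos
    have h8 : (0:ℝ) < 1/(8*w) := by positivity
    apply Integrable.mono' (g := fun x =>
      (|K| * (Real.sqrt (2*π*w))⁻¹ * Real.exp (m^2/(2*w) + 2*w*d^2)) * Real.exp (-(1/(8*w)) * x^2))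
      ((integrable_exp_neg_mul_sq h8).const_mul _)
    · apply Measurable.aestronglyMeasurable
      apply Measurable.mul
      · exact (measurable_abs.const_mul d).exp.const_mul K
      · exact (measurable_gaussianPDF m v).ennreal_toReal
    · refine Eventually.of_forall fun x => ?_
      have hpdf : (gaussianPDF m v x).toReal = gaussianPDFReal m v x :=
        ENNReal.toReal_ofReal (gaussianPDFReal_nonneg m v x)
      rw [hpdf]
      have hpdfnn : 0 ≤ gaussianPDFReal m v x := gaussianPDFReal_nonneg m v x
      rw [Real.norm_eq_abs, abs_mul, abs_mul, abs_of_nonneg (Real.exp_nonneg _),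
        abs_of_nonneg hpdfnn]
      rw [show gaussianPDFReal m v x = (Real.sqrt (2*π*w))⁻¹ * rexp (-(x-m)^2/(2*w)) from rfl]
      have hsq : (0:ℝ) ≤ (Real.sqrt (2*π*w))⁻¹ := by positivity
      have hexp : Real.exp (d * |x|) * Real.exp (-(x - m)^2 / (2*w)) ≤
          Real.exp (m^2/(2*w) + 2*w*d^2) * Real.exp (-(1/(8*w)) * x^2) := by
        rw [← Real.exp_add, ← Real.exp_add]
        apply Real.exp_le_exp.mpr
        have e1 : d * |x| + -(x - m)^2 / (2*w) = (8*w*(d*|x|) - 4*(x-m)^2) / (8*w) := by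
          field_simp; ring
        have e2 : m^2/(2*w) + 2*w*d^2 + -(1/(8*w)) * x^2 = (4*m^2 + 16*w^2*d^2 - x^2) / (8*w) := by
          field_simp; ring
        rw [e1, e2]
        apply div_le_div_of_nonneg_right _ (by positivity)
        nlinarith [sq_nonneg (|x| - 4*w*d), sq_nonneg (x - 2*m), sq_abs x, abs_nonneg x]
      calc |K| * Real.exp (d * |x|) * ((Real.sqrt (2*π*w))⁻¹ * Real.exp (-(x - m)^2 / (2*w)))
          = (|K| * (Real.sqrt (2*π*w))⁻¹) *
            (Real.exp (d * |x|) * Real.exp (-(x - m)^2 / (2*w))) := by ring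
        _ ≤ (|K| * (Real.sqrt (2*π*w))⁻¹) *
            (Real.exp (m^2/(2*w) + 2*w*d^2) * Real.exp (-(1/(8*w)) * x^2)) := by
            apply mul_le_mul_of_nonneg_left hexp (by positivity)
        _ = (|K| * (Real.sqrt (2*π*w))⁻¹ * Real.exp (m^2/(2*w) + 2*w*d^2)) *
            Real.exp (-(1/(8*w)) * x^2) := by ring

lemma integrable_of_expb (m : ℝ) (v : ℝ≥0) {h : ℝ → ℝ} (hcont : Continuous h) {K d : ℝ}
    (hb : ∀ y, |h y| ≤ K * Real.exp (d * |y|)) : Integrable h (gaussianReal m v) :=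
  (expb_integrable m v K d).mono' hcont.aestronglyMeasurable
    (Eventually.of_forall fun y => by simpa [Real.norm_eq_abs] using hb y)

lemma gaussianReal_map_affine (m a : ℝ) :
    Measure.map (fun z => a * z + m) (gaussianReal 0 1) = gaussianReal m ((a^2).toNNReal) := by
  have h1 : (fun z : ℝ => a * z + m) = (fun x => x + m) ∘ (fun z => a * z) := rfl
  rw [h1, ← Measure.map_map (measurable_add_const m) (measurable_const_mul a)]
  rw [gaussianReal_map_const_mul a, gaussianReal_map_add_const m]
  norm_num
  congr 1
  ext
  simp [Real.coe_toNNReal _ (sq_nonneg a)]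

lemma integral_gaussianReal_rep (m a : ℝ) {h : ℝ → ℝ} (hcont : Continuous h) :
    ∫ x, h x ∂(gaussianReal m ((a^2).toNNReal))
      = ∫ z, h (a * z + m) ∂(gaussianReal 0 1) := by
  rw [← gaussianReal_map_affine m a]
  exact integral_map (((measurable_const_mul a).add_const m)).aemeasurable
    hcont.aestronglyMeasurable

/-- Integral against the standard Gaussian as a Lebesgue integral against the density. -/
lemma integral_gaussianReal_std (φ : ℝ → ℝ) :
    ∫ z, φ z ∂(gaussianReal 0 1)
      = ∫ z, gaussianPDFReal 0 1 z * φ z := by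
  rw [gaussianReal_of_var_ne_zero 0 one_ne_zero]
  have h1 : gaussianPDF 0 1 = fun x => ((Real.toNNReal (gaussianPDFReal 0 1 x) : ℝ≥0) : ℝ≥0∞) :=
    rfl
  rw [h1, integral_withDensity_eq_integral_smul (measurable_gaussianPDFReal 0 1).real_toNNReal]
  congr 1
  ext z
  rw [NNReal.smul_def, smul_eq_mul, Real.coe_toNNReal _ (gaussianPDFReal_nonneg 0 1 z)]

lemma exp_poly_bound (a z : ℝ) : a * |z| - z^2/2 ≤ a^2 - (1/4) * z^2 := by
  nlinarith [sq_nonneg (|z| - 2*a), sq_abs z]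

lemma abs_le_exp_abs (z : ℝ) : |z| ≤ Real.exp |z| :=
  le_trans (by linarith) (Real.add_one_le_exp |z|)

lemma exp_quarter_tendsto_atTop :
    Tendsto (fun z : ℝ => Real.exp (-(1/4) * z^2)) atTop (nhds 0) := by
  have h1 : Tendsto (fun z : ℝ => (1/4) * z^2) atTop atTop :=
    (tendsto_pow_atTop two_ne_zero).const_mul_atTop (by norm_num)
  have := (Real.tendsto_exp_neg_atTop_nhds_zero).comp h1
  refine this.congr fun z => ?_
  simp [Function.comp, neg_mul]

lemma exp_quarter_tendsto_atBot :
    Tendsto (fun z : ℝ => Real.exp (-(1/4) * z^2)) atBot (nhds 0) := by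
  have h1 : Tendsto (fun z : ℝ => (1/4) * |z|^2) atBot atTop :=
    (((tendsto_pow_atTop two_ne_zero).const_mul_atTop
      (by norm_num : (0:ℝ) < 1/4)).comp tendsto_abs_atBot_atTop)
  have := (Real.tendsto_exp_neg_atTop_nhds_zero).comp h1
  refine this.congr fun z => ?_
  simp [Function.comp, neg_mul, sq_abs]

lemma gaussian_ibp {ψ : ℝ → ℝ} (hψ : ContDiff ℝ 1 ψ) {M c : ℝ} (hM : 0 ≤ M)
    (hb1 : ∀ z, |ψ z| ≤ M * Real.exp (c * |z|))
    (hb2 : ∀ z, |deriv ψ z| ≤ M * Real.exp (c * |z|)) :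
    ∫ z, z * ψ z ∂(gaussianReal 0 1) = ∫ z, deriv ψ z ∂(gaussianReal 0 1) := by
  have hψd : Differentiable ℝ ψ := hψ.differentiable one_ne_zero
  have hψ'c : Continuous (deriv ψ) := hψ.continuous_deriv le_rfl
  set c' : ℝ := |c| with hc'def
  have hc'0 : 0 ≤ c' := abs_nonneg c
  have hb1' : ∀ z, |ψ z| ≤ M * Real.exp (c' * |z|) := fun z =>
    (hb1 z).trans (mul_le_mul_of_nonneg_left (Real.exp_le_exp.mpr
      (mul_le_mul_of_nonneg_right (le_abs_self c) (abs_nonneg z))) hM)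
  have hb2' : ∀ z, |deriv ψ z| ≤ M * Real.exp (c' * |z|) := fun z =>
    (hb2 z).trans (mul_le_mul_of_nonneg_left (Real.exp_le_exp.mpr
      (mul_le_mul_of_nonneg_right (le_abs_self c) (abs_nonneg z))) hM)
  set G : ℝ → ℝ := fun z => -(ψ z * Real.exp (-(z^2)/2)) with hGdef
  set f : ℝ → ℝ := fun z => (z * ψ z - deriv ψ z) * Real.exp (-(z^2)/2) with hfdef
  have hexpd : ∀ z : ℝ, HasDerivAt (fun y : ℝ => Real.exp (-(y^2)/2))
      (Real.exp (-(z^2)/2) * (-z)) z := by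
    intro z
    have h1 : HasDerivAt (fun y : ℝ => -(y^2)/2) (-z) z := by
      have h := ((hasDerivAt_pow 2 z).neg.div_const 2)
      refine h.congr_deriv ?_
      simp; ring
    exact h1.exp
  have hG : ∀ z, HasDerivAt G (f z) z := by
    intro z
    have h4 := (((hψd z).hasDerivAt).mul (hexpd z)).neg
    refine h4.congr_deriv ?_
    simp only [hfdef]
    ring
  have hGbound : ∀ z, ‖G z‖ ≤ (M * Real.exp (c'^2)) * Real.exp (-(1/4) * z^2) := by
    intro z
    rw [Real.norm_eq_abs, hGdef, abs_neg, abs_mul, abs_of_nonneg (Real.exp_nonneg _)]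
    calc |ψ z| * Real.exp (-(z^2)/2) ≤ (M * Real.exp (c' * |z|)) * Real.exp (-(z^2)/2) :=
          mul_le_mul_of_nonneg_right (hb1' z) (Real.exp_nonneg _)
      _ = M * Real.exp (c' * |z| - z^2/2) := by rw [mul_assoc, ← Real.exp_add]; ring_nf
      _ ≤ M * Real.exp (c'^2 - (1/4) * z^2) :=
          mul_le_mul_of_nonneg_left (Real.exp_le_exp.mpr (exp_poly_bound c' z)) hM
      _ = (M * Real.exp (c'^2)) * Real.exp (-(1/4) * z^2) := by
          rw [mul_assoc, ← Real.exp_add]; ring_nf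
  have htop : Tendsto G atTop (nhds 0) :=
    squeeze_zero_norm hGbound (by simpa using (exp_quarter_tendsto_atTop.const_mul
      (M * Real.exp (c'^2))))
  have hbot : Tendsto G atBot (nhds 0) :=
    squeeze_zero_norm hGbound (by simpa using (exp_quarter_tendsto_atBot.const_mul
      (M * Real.exp (c'^2))))
  have hfcont : Continuous f :=
    ((continuous_id.mul hψ.continuous).sub hψ'c).mul
      (((continuous_pow 2).neg.div_const 2).rexp)
  have hfbound : ∀ z, ‖f z‖ ≤ (M * Real.exp ((c'+1)^2)) * Real.exp (-(1/4) * z^2) := by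
    intro z
    rw [Real.norm_eq_abs, hfdef, abs_mul, abs_of_nonneg (Real.exp_nonneg _)]
    have h5 : |z * ψ z - deriv ψ z| ≤ M * (|z| + 1) * Real.exp (c' * |z|) := by
      calc |z * ψ z - deriv ψ z| ≤ |z * ψ z| + |deriv ψ z| := abs_sub _ _
        _ = |z| * |ψ z| + |deriv ψ z| := by rw [abs_mul]
        _ ≤ |z| * (M * Real.exp (c' * |z|)) + M * Real.exp (c' * |z|) :=
            add_le_add (mul_le_mul_of_nonneg_left (hb1' z) (abs_nonneg z)) (hb2' z)
        _ = M * (|z| + 1) * Real.exp (c' * |z|) := by ring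
    have h6 : M * (|z| + 1) * Real.exp (c' * |z|) ≤ M * Real.exp ((c'+1) * |z|) := by
      have h7 : |z| + 1 ≤ Real.exp |z| := Real.add_one_le_exp _
      calc M * (|z| + 1) * Real.exp (c' * |z|) ≤ M * Real.exp |z| * Real.exp (c' * |z|) := by
            apply mul_le_mul_of_nonneg_right _ (Real.exp_nonneg _)
            exact mul_le_mul_of_nonneg_left h7 hM
        _ = M * Real.exp ((c'+1) * |z|) := by rw [mul_assoc, ← Real.exp_add]; ring_nf
    calc |z * ψ z - deriv ψ z| * Real.exp (-(z^2)/2)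
        ≤ (M * Real.exp ((c'+1) * |z|)) * Real.exp (-(z^2)/2) :=
          mul_le_mul_of_nonneg_right (h5.trans h6) (Real.exp_nonneg _)
      _ = M * Real.exp ((c'+1) * |z| - z^2/2) := by rw [mul_assoc, ← Real.exp_add]; ring_nf
      _ ≤ M * Real.exp ((c'+1)^2 - (1/4) * z^2) :=
          mul_le_mul_of_nonneg_left (Real.exp_le_exp.mpr (exp_poly_bound (c'+1) z)) hM
      _ = (M * Real.exp ((c'+1)^2)) * Real.exp (-(1/4) * z^2) := by
          rw [mul_assoc, ← Real.exp_add]; ring_nf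
  have hf_int : Integrable f := by
    apply Integrable.mono' (((integrable_exp_neg_mul_sq
      (by norm_num : (0:ℝ) < 1/4)).const_mul (M * Real.exp ((c'+1)^2))))
      hfcont.aestronglyMeasurable
    exact Eventually.of_forall fun z => by simpa [neg_mul] using hfbound z
  have hIoi : ∫ z in Ioi (0:ℝ), f z = 0 - G 0 :=
    integral_Ioi_of_hasDerivAt_of_tendsto ((hG 0).continuousAt).continuousWithinAt
      (fun x _ => hG x) hf_int.integrableOn htop
  have hIic : ∫ z in Iic (0:ℝ), f z = G 0 - 0 :=
    integral_Iic_of_hasDerivAt_of_tendsto ((hG 0).continuousAt).continuousWithinAt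
      (fun x _ => hG x) hf_int.integrableOn hbot
  have hR : ∫ z, f z = 0 := by
    rw [← intervalIntegral.integral_Iic_add_Ioi hf_int.integrableOn hf_int.integrableOn, hIoi, hIic]
    ring
  have hγ : ∫ z, (z * ψ z - deriv ψ z) ∂(gaussianReal 0 1) = 0 := by
    rw [integral_gaussianReal_std]
    have heq : ∀ z, gaussianPDFReal 0 1 z * (z * ψ z - deriv ψ z)
        = (Real.sqrt (2*π))⁻¹ * f z := by
      intro z
      rw [show gaussianPDFReal 0 1 z
        = (Real.sqrt (2*π*((1:ℝ≥0):ℝ)))⁻¹ * Real.exp (-(z-0)^2/(2*((1:ℝ≥0):ℝ))) from rfl]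
      simp only [NNReal.coe_one, mul_one, sub_zero, hfdef]
      ring
    simp_rw [heq]
    rw [MeasureTheory.integral_const_mul, hR, mul_zero]
  have hint1 : Integrable (fun z => z * ψ z) (gaussianReal 0 1) := by
    apply integrable_of_expb 0 1 (continuous_id.mul hψ.continuous)
      (K := M) (d := c' + 1)
    intro y
    rw [Pi.mul_apply, id_eq, abs_mul]
    calc |y| * |ψ y| ≤ Real.exp |y| * (M * Real.exp (c' * |y|)) := by
          apply mul_le_mul (abs_le_exp_abs y) (hb1' y) (abs_nonneg _) (Real.exp_nonneg _)
      _ = M * Real.exp ((c'+1) * |y|) := by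
          rw [← mul_assoc, mul_comm _ M, mul_assoc, ← Real.exp_add,
            show |y| + c' * |y| = (c'+1) * |y| by ring]
  have hint2 : Integrable (deriv ψ) (gaussianReal 0 1) :=
    integrable_of_expb 0 1 hψ'c hb2'
  have hsub := integral_sub hint1 hint2
  rw [hγ] at hsub
  linarith

noncomputable def Phi (b σ : ℝ) (h : ℝ → ℝ) (s : ℝ) : ℝ :=
  ∫ x, h x ∂(gaussianReal (b * s) ((σ ^ 2 * s).toNNReal))

lemma Phi_rep (b σ : ℝ) (hσ : 0 ≤ σ) {h : ℝ → ℝ} (hcont : Continuous h) {s : ℝ} (hs : 0 ≤ s) :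
    Phi b σ h s = ∫ z, h (σ * Real.sqrt s * z + b * s) ∂(gaussianReal 0 1) := by
  have hv : ((σ * Real.sqrt s) ^ 2).toNNReal = (σ ^ 2 * s).toNNReal := by
    rw [mul_pow, Real.sq_sqrt hs]
  rw [Phi, ← hv, integral_gaussianReal_rep _ _ hcont]

lemma Phi_zero (b σ : ℝ) (h : ℝ → ℝ) : Phi b σ h 0 = h 0 := by
  rw [Phi]
  norm_num

lemma affine_expb {h : ℝ → ℝ} {M c : ℝ} (hM : 0 ≤ M) (hc : 0 ≤ c)
    (hb : ∀ y, |h y| ≤ M * Real.exp (c * |y|)) (a m z : ℝ) :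
    |h (a * z + m)| ≤ (M * Real.exp (c * |m|)) * Real.exp ((c * |a|) * |z|) := by
  calc |h (a * z + m)| ≤ M * Real.exp (c * |a * z + m|) := hb _
    _ ≤ M * Real.exp (c * (|a| * |z| + |m|)) := by
        apply mul_le_mul_of_nonneg_left _ hM
        apply Real.exp_le_exp.mpr
        apply mul_le_mul_of_nonneg_left _ hc
        calc |a * z + m| ≤ |a * z| + |m| := abs_add_le _ _
          _ = |a| * |z| + |m| := by rw [abs_mul]
    _ = (M * Real.exp (c * |m|)) * Real.exp ((c * |a|) * |z|) := by
        rw [mul_assoc, ← Real.exp_add]; ring_nf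

lemma Phi_continuousOn (b σ : ℝ) (hσ : 0 ≤ σ) {h : ℝ → ℝ} (hcont : Continuous h) {M c : ℝ}
    (hM : 0 ≤ M) (hc : 0 ≤ c) (hb : ∀ y, |h y| ≤ M * Real.exp (c * |y|)) :
    ContinuousOn (Phi b σ h) (Ici 0) := by
  intro s0 hs0
  have hs0' : (0:ℝ) ≤ s0 := hs0
  have hrep : ∀ s ∈ Ici (0:ℝ), Phi b σ h s
      = ∫ z, h (σ * Real.sqrt s * z + b * s) ∂(gaussianReal 0 1) :=
    fun s hs => Phi_rep b σ hσ hcont hs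
  have hkey : ContinuousWithinAt
      (fun s => ∫ z, h (σ * Real.sqrt s * z + b * s) ∂(gaussianReal 0 1)) (Ici 0) s0 := by
    apply continuousWithinAt_of_dominated (bound := fun z =>
      (M * Real.exp (c * (|b| * (s0+1)))) * Real.exp ((c * (σ * Real.sqrt (s0+1))) * |z|))
    · exact Eventually.of_forall fun s =>
        ((by fun_prop : Continuous fun z => h (σ * Real.sqrt s * z + b * s))).aestronglyMeasurable
    · have h1 : ∀ᶠ s in nhdsWithin s0 (Ici 0), s ∈ Iio (s0 + 1) :=
        eventually_nhdsWithin_of_eventually_nhds (Iio_mem_nhds (by linarith))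
      have h2 : ∀ᶠ s in nhdsWithin s0 (Ici 0), s ∈ Ici (0:ℝ) :=
        eventually_mem_nhdsWithin
      filter_upwards [h1, h2] with s hs1 hs2
      refine Eventually.of_forall fun z => ?_
      have hsle : s ≤ s0 + 1 := le_of_lt hs1
      have hsnn : (0:ℝ) ≤ s := hs2
      rw [Real.norm_eq_abs]
      calc |h (σ * Real.sqrt s * z + b * s)|
          ≤ M * Real.exp (c * |σ * Real.sqrt s * z + b * s|) := hb _
        _ ≤ M * Real.exp (c * (|b| * (s0+1)) + (c * (σ * Real.sqrt (s0+1))) * |z|) := by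
            apply mul_le_mul_of_nonneg_left _ hM
            apply Real.exp_le_exp.mpr
            have habs : |σ * Real.sqrt s * z + b * s|
                ≤ σ * Real.sqrt (s0+1) * |z| + |b| * (s0+1) := by
              calc |σ * Real.sqrt s * z + b * s| ≤ |σ * Real.sqrt s * z| + |b * s| := abs_add_le _ _
                _ = σ * Real.sqrt s * |z| + |b| * s := by
                    rw [abs_mul, abs_mul, abs_mul, abs_of_nonneg hσ,
                      abs_of_nonneg (Real.sqrt_nonneg s), abs_of_nonneg hsnn]
                _ ≤ σ * Real.sqrt (s0+1) * |z| + |b| * (s0+1) := by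
                    have := Real.sqrt_le_sqrt hsle
                    have h3 : σ * Real.sqrt s * |z| ≤ σ * Real.sqrt (s0+1) * |z| := by
                      apply mul_le_mul_of_nonneg_right _ (abs_nonneg z)
                      exact mul_le_mul_of_nonneg_left this hσ
                    have h4 : |b| * s ≤ |b| * (s0+1) :=
                      mul_le_mul_of_nonneg_left hsle (abs_nonneg b)
                    linarith
            calc c * |σ * Real.sqrt s * z + b * s|
                ≤ c * (σ * Real.sqrt (s0+1) * |z| + |b| * (s0+1)) :=
                  mul_le_mul_of_nonneg_left habs hc
              _ = c * (|b| * (s0+1)) + (c * (σ * Real.sqrt (s0+1))) * |z| := by ring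
        _ = (M * Real.exp (c * (|b| * (s0+1)))) *
            Real.exp ((c * (σ * Real.sqrt (s0+1))) * |z|) := by
            rw [Real.exp_add, ← mul_assoc]
    · exact expb_integrable 0 1 _ _
    · refine Eventually.of_forall fun z => ?_
      exact ((by fun_prop : Continuous fun s => h (σ * Real.sqrt s * z + b * s))).continuousWithinAt
  exact (hkey.congr hrep (hrep s0 hs0))

lemma Phi_hasDerivAt (b σ : ℝ) (hσ : 0 ≤ σ) {h : ℝ → ℝ} (hh : ContDiff ℝ 2 h) {M c : ℝ}
    (hM : 0 ≤ M) (hc : 0 ≤ c)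
    (hb0 : ∀ y, |h y| ≤ M * Real.exp (c * |y|))
    (hb1 : ∀ y, |deriv h y| ≤ M * Real.exp (c * |y|))
    (hb2 : ∀ y, |deriv (deriv h) y| ≤ M * Real.exp (c * |y|))
    {s : ℝ} (hs : 0 < s) :
    HasDerivAt (Phi b σ h) (Phi b σ (driftGen b σ h) s) s := by
  have hcont : Continuous h := hh.continuous
  have hd1 : ContDiff ℝ 1 (deriv h) := by
    have h2 : ContDiff ℝ ((1 + 1 : ℕ) : ℕ) h := by exact_mod_cast hh
    simpa using h2.iterate_deriv' 1 1
  have hder : Differentiable ℝ h := hh.differentiable two_ne_zero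
  have hder2 : Differentiable ℝ (deriv h) := hd1.differentiable one_ne_zero
  have hcont1 : Continuous (deriv h) := hd1.continuous
  have hcont2 : Continuous (deriv (deriv h)) := hd1.continuous_deriv le_rfl
  have hsqs : (0:ℝ) < Real.sqrt s := Real.sqrt_pos.mpr hs
  have hsq2 : (0:ℝ) < Real.sqrt (s/2) := Real.sqrt_pos.mpr (by linarith)
  -- constants for the domination
  set K : ℝ := M * Real.exp (c * (|b| * (2*s))) * (σ/(2*Real.sqrt (s/2)) + |b|) with hKdef
  set d : ℝ := c * (σ * Real.sqrt (2*s)) + 1 with hddef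
  have hK0 : 0 ≤ K := by positivity
  have key := hasDerivAt_integral_of_dominated_loc_of_deriv_le
    (F := fun r z => h (σ * Real.sqrt r * z + b * r))
    (F' := fun r z => deriv h (σ * Real.sqrt r * z + b * r) * (σ * (1/(2*Real.sqrt r)) * z + b))
    (x₀ := s) (s := Metric.ball s (s/2)) (μ := gaussianReal 0 1)
    (bound := fun z => K * Real.exp (d * |z|))
    (Metric.ball_mem_nhds s (half_pos hs))
    (Eventually.of_forall fun r =>
      ((by fun_prop : Continuous fun z => h (σ * Real.sqrt r * z + b * r))).aestronglyMeasurable)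
    (by
      apply integrable_of_expb 0 1 (by fun_prop : Continuous fun z => h (σ * Real.sqrt s * z + b * s))
        (K := M * Real.exp (c * |b * s|)) (d := c * |σ * Real.sqrt s|)
      exact fun z => affine_expb hM hc hb0 _ _ z)
    ((by fun_prop : Continuous fun z =>
      deriv h (σ * Real.sqrt s * z + b * s) * (σ * (1/(2*Real.sqrt s)) * z + b)).aestronglyMeasurable)
    (by
      refine Eventually.of_forall fun z => fun r hr => ?_
      rw [Metric.mem_ball, Real.dist_eq, abs_lt] at hr
      have hr1 : s/2 < r := by linarith [hr.1]
      have hr0 : 0 < r := by linarith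
      have hr2 : r ≤ 2*s := by linarith [hr.2]
      have hsqr1 : Real.sqrt (s/2) ≤ Real.sqrt r := Real.sqrt_le_sqrt (le_of_lt hr1)
      have hsqr2 : Real.sqrt r ≤ Real.sqrt (2*s) := Real.sqrt_le_sqrt hr2
      have hsqrpos : 0 < Real.sqrt r := Real.sqrt_pos.mpr hr0
      rw [Real.norm_eq_abs, abs_mul]
      have hfac1 : |deriv h (σ * Real.sqrt r * z + b * r)|
          ≤ M * Real.exp (c * (|b| * (2*s))) * Real.exp ((c * (σ * Real.sqrt (2*s))) * |z|) := by
        calc |deriv h (σ * Real.sqrt r * z + b * r)|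
            ≤ M * Real.exp (c * |σ * Real.sqrt r * z + b * r|) := hb1 _
          _ ≤ M * Real.exp (c * (σ * Real.sqrt (2*s) * |z| + |b| * (2*s))) := by
              apply mul_le_mul_of_nonneg_left _ hM
              apply Real.exp_le_exp.mpr
              apply mul_le_mul_of_nonneg_left _ hc
              calc |σ * Real.sqrt r * z + b * r| ≤ |σ * Real.sqrt r * z| + |b * r| := abs_add_le _ _
                _ = σ * Real.sqrt r * |z| + |b| * r := by
                    rw [abs_mul, abs_mul, abs_mul, abs_of_nonneg hσ,
                      abs_of_nonneg (Real.sqrt_nonneg r), abs_of_nonneg (le_of_lt hr0)]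
                _ ≤ σ * Real.sqrt (2*s) * |z| + |b| * (2*s) := by
                    have h3 : σ * Real.sqrt r * |z| ≤ σ * Real.sqrt (2*s) * |z| :=
                      mul_le_mul_of_nonneg_right
                        (mul_le_mul_of_nonneg_left hsqr2 hσ) (abs_nonneg z)
                    have h4 : |b| * r ≤ |b| * (2*s) :=
                      mul_le_mul_of_nonneg_left hr2 (abs_nonneg b)
                    linarith
          _ = M * Real.exp (c * (|b| * (2*s))) * Real.exp ((c * (σ * Real.sqrt (2*s))) * |z|) := by
              rw [mul_assoc M, ← Real.exp_add]
              congr 1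
              ring
      have hfac2 : |σ * (1/(2*Real.sqrt r)) * z + b|
          ≤ (σ/(2*Real.sqrt (s/2)) + |b|) * Real.exp (1 * |z|) := by
        have hz1 : (1:ℝ) ≤ Real.exp |z| := by
          rw [← Real.exp_zero]
          exact Real.exp_le_exp.mpr (abs_nonneg z)
        have hz2 : |z| ≤ Real.exp |z| := abs_le_exp_abs z
        calc |σ * (1/(2*Real.sqrt r)) * z + b|
            ≤ |σ * (1/(2*Real.sqrt r)) * z| + |b| := abs_add_le _ _
          _ = σ * (1/(2*Real.sqrt r)) * |z| + |b| := by
              rw [abs_mul, abs_mul, abs_of_nonneg hσ,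
                abs_of_nonneg (by positivity : (0:ℝ) ≤ 1/(2*Real.sqrt r))]
          _ ≤ σ / (2*Real.sqrt (s/2)) * |z| + |b| := by
              have hmono : σ * (1/(2*Real.sqrt r)) ≤ σ / (2*Real.sqrt (s/2)) := by
                rw [mul_one_div]
                exact div_le_div_of_nonneg_left hσ (by positivity) (by linarith)
              exact add_le_add_left (mul_le_mul_of_nonneg_right hmono (abs_nonneg z)) _
          _ ≤ (σ/(2*Real.sqrt (s/2)) + |b|) * Real.exp (1 * |z|) := by
              rw [one_mul]
              have hnn : (0:ℝ) ≤ σ/(2*Real.sqrt (s/2)) := by positivity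
              calc σ / (2*Real.sqrt (s/2)) * |z| + |b|
                  ≤ σ / (2*Real.sqrt (s/2)) * Real.exp |z| + |b| * Real.exp |z| := by
                    have := mul_le_mul_of_nonneg_left hz2 hnn
                    have := le_mul_of_one_le_right (abs_nonneg b) hz1
                    linarith
                _ = (σ/(2*Real.sqrt (s/2)) + |b|) * Real.exp |z| := by ring
      calc |deriv h (σ * Real.sqrt r * z + b * r)| * |σ * (1/(2*Real.sqrt r)) * z + b|
          ≤ (M * Real.exp (c * (|b| * (2*s))) * Real.exp ((c * (σ * Real.sqrt (2*s))) * |z|))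
            * ((σ/(2*Real.sqrt (s/2)) + |b|) * Real.exp (1 * |z|)) :=
            mul_le_mul hfac1 hfac2 (abs_nonneg _) (by positivity)
        _ = K * Real.exp (d * |z|) := by
            rw [hKdef, hddef]
            rw [show (M * Real.exp (c * (|b| * (2*s))) * Real.exp ((c * (σ * Real.sqrt (2*s))) * |z|))
              * ((σ/(2*Real.sqrt (s/2)) + |b|) * Real.exp (1 * |z|))
              = M * Real.exp (c * (|b| * (2*s))) * (σ/(2*Real.sqrt (s/2)) + |b|)
                * (Real.exp ((c * (σ * Real.sqrt (2*s))) * |z|) * Real.exp (1 * |z|)) by ring]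
            rw [← Real.exp_add]
            congr 1
            ring)
    (expb_integrable 0 1 K d)
    (by
      refine Eventually.of_forall fun z => fun r hr => ?_
      rw [Metric.mem_ball, Real.dist_eq, abs_lt] at hr
      have hr0 : 0 < r := by linarith [hr.1]
      have hinner : HasDerivAt (fun r => σ * Real.sqrt r * z + b * r)
          (σ * (1/(2*Real.sqrt r)) * z + b) r := by
        have hsq := Real.hasDerivAt_sqrt (ne_of_gt hr0)
        have h2 : HasDerivAt (fun r : ℝ => σ * Real.sqrt r * z)
            (σ * (1/(2*Real.sqrt r)) * z) r := (hsq.const_mul σ).mul_const z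
        have h3 : HasDerivAt (fun r : ℝ => b * r) b r := by
          simpa using (hasDerivAt_id r).const_mul b
        exact h2.add h3
      exact ((hder _).hasDerivAt).comp r hinner)
  obtain ⟨-, hD⟩ := key
  -- identify the function near s with Phi
  have hev : (fun r => ∫ z, h (σ * Real.sqrt r * z + b * r) ∂(gaussianReal 0 1))
      =ᶠ[nhds s] Phi b σ h := by
    filter_upwards [Ioi_mem_nhds hs] with r hr
    exact (Phi_rep b σ hσ hcont (le_of_lt hr)).symm
  have hD2 := hD.congr_of_eventuallyEq hev.symm
  -- identify the derivative value
  have hval : (∫ z, deriv h (σ * Real.sqrt s * z + b * s) * (σ * (1/(2*Real.sqrt s)) * z + b)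
      ∂(gaussianReal 0 1)) = Phi b σ (driftGen b σ h) s := by
    have hgencont : Continuous (driftGen b σ h) := by
      show Continuous fun x => b * deriv h x + σ ^ 2 / 2 * deriv (deriv h) x
      fun_prop
    rw [Phi_rep b σ hσ hgencont (le_of_lt hs)]
    -- integrabilities
    have hintψ : Integrable (fun z => deriv h (σ * Real.sqrt s * z + b * s))
        (gaussianReal 0 1) :=
      integrable_of_expb 0 1 (by fun_prop) (fun z => affine_expb hM hc hb1 _ _ z)
    have hintψ2 : Integrable (fun z => deriv (deriv h) (σ * Real.sqrt s * z + b * s))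
        (gaussianReal 0 1) :=
      integrable_of_expb 0 1 (by fun_prop) (fun z => affine_expb hM hc hb2 _ _ z)
    have hintz : Integrable (fun z => z * deriv h (σ * Real.sqrt s * z + b * s))
        (gaussianReal 0 1) := by
      apply integrable_of_expb 0 1 (by fun_prop)
        (K := M * Real.exp (c * |b * s|)) (d := c * |σ * Real.sqrt s| + 1)
      intro z
      rw [abs_mul]
      calc |z| * |deriv h (σ * Real.sqrt s * z + b * s)|
          ≤ Real.exp |z| * ((M * Real.exp (c * |b * s|))
              * Real.exp ((c * |σ * Real.sqrt s|) * |z|)) :=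
            mul_le_mul (abs_le_exp_abs z) (affine_expb hM hc hb1 _ _ z) (abs_nonneg _)
              (Real.exp_nonneg _)
        _ = M * Real.exp (c * |b * s|) * Real.exp ((c * |σ * Real.sqrt s| + 1) * |z|) := by
            rw [show Real.exp |z| * ((M * Real.exp (c * |b * s|))
              * Real.exp ((c * |σ * Real.sqrt s|) * |z|))
              = M * Real.exp (c * |b * s|)
                * (Real.exp ((c * |σ * Real.sqrt s|) * |z|) * Real.exp |z|) by ring,
              ← Real.exp_add]
            congr 1
            ring
    -- split the integrand
    have hsplit : (fun z => deriv h (σ * Real.sqrt s * z + b * s)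
          * (σ * (1/(2*Real.sqrt s)) * z + b))
        = fun z => b * deriv h (σ * Real.sqrt s * z + b * s)
          + (σ * (1/(2*Real.sqrt s))) * (z * deriv h (σ * Real.sqrt s * z + b * s)) :=
      funext fun z => by ring
    rw [hsplit, integral_add (hintψ.const_mul b) (hintz.const_mul _),
      MeasureTheory.integral_const_mul, MeasureTheory.integral_const_mul]
    -- integration by parts on the second term
    have haffC : ContDiff ℝ 1 (fun z : ℝ => σ * Real.sqrt s * z + b * s) :=
      (contDiff_const.mul contDiff_id).add contDiff_const
    have hψC : ContDiff ℝ 1 (fun z => deriv h (σ * Real.sqrt s * z + b * s)) :=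
      hd1.comp haffC
    have hψderiv : deriv (fun z => deriv h (σ * Real.sqrt s * z + b * s))
        = fun z => deriv (deriv h) (σ * Real.sqrt s * z + b * s) * (σ * Real.sqrt s) := by
      funext z
      have haff : HasDerivAt (fun z : ℝ => σ * Real.sqrt s * z + b * s) (σ * Real.sqrt s) z := by
        simpa using ((hasDerivAt_id z).const_mul (σ * Real.sqrt s)).add_const (b * s)
      exact (((hder2 _).hasDerivAt).comp z haff).deriv
    set Ka : ℝ := M * Real.exp (c * |b * s|) with hKa
    set da : ℝ := c * |σ * Real.sqrt s| with hda
    have hKa0 : 0 ≤ Ka := by positivity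
    have hMψ0 : 0 ≤ Ka * (1 + σ * Real.sqrt s) := by positivity
    have hexpnn : ∀ z : ℝ, (0:ℝ) ≤ Real.exp (da * |z|) := fun z => Real.exp_nonneg _
    have hψ1 : ∀ z, |deriv h (σ * Real.sqrt s * z + b * s)|
        ≤ (Ka * (1 + σ * Real.sqrt s)) * Real.exp (da * |z|) := by
      intro z
      calc |deriv h (σ * Real.sqrt s * z + b * s)| ≤ Ka * Real.exp (da * |z|) :=
          affine_expb hM hc hb1 _ _ z
        _ ≤ (Ka * (1 + σ * Real.sqrt s)) * Real.exp (da * |z|) := by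
            apply mul_le_mul_of_nonneg_right _ (hexpnn z)
            nlinarith [mul_nonneg hKa0 (mul_nonneg hσ (Real.sqrt_nonneg s))]
    have hψ2 : ∀ z, |deriv (fun z => deriv h (σ * Real.sqrt s * z + b * s)) z|
        ≤ (Ka * (1 + σ * Real.sqrt s)) * Real.exp (da * |z|) := by
      intro z
      rw [hψderiv]
      rw [abs_mul, abs_of_nonneg (by positivity : (0:ℝ) ≤ σ * Real.sqrt s)]
      calc |deriv (deriv h) (σ * Real.sqrt s * z + b * s)| * (σ * Real.sqrt s)
          ≤ (Ka * Real.exp (da * |z|)) * (σ * Real.sqrt s) :=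
            mul_le_mul_of_nonneg_right (affine_expb hM hc hb2 _ _ z) (by positivity)
        _ ≤ (Ka * (1 + σ * Real.sqrt s)) * Real.exp (da * |z|) := by
            nlinarith [mul_nonneg hKa0 (hexpnn z), Real.sqrt_nonneg s, hσ,
              mul_nonneg (mul_nonneg hKa0 (hexpnn z)) (mul_nonneg hσ (Real.sqrt_nonneg s))]
    have hibp := gaussian_ibp hψC hMψ0 hψ1 hψ2
    rw [hibp, hψderiv, MeasureTheory.integral_mul_const]
    -- now compute the expression
    have hcoef : σ * (1/(2*Real.sqrt s)) * (σ * Real.sqrt s) = σ^2/2 := by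
      have hne : Real.sqrt s ≠ 0 := ne_of_gt hsqs
      field_simp
    have hrhs : (∫ z, driftGen b σ h (σ * Real.sqrt s * z + b * s) ∂(gaussianReal 0 1))
        = b * (∫ z, deriv h (σ * Real.sqrt s * z + b * s) ∂(gaussianReal 0 1))
          + σ^2/2 * (∫ z, deriv (deriv h) (σ * Real.sqrt s * z + b * s) ∂(gaussianReal 0 1)) := by
      rw [show (fun z => driftGen b σ h (σ * Real.sqrt s * z + b * s))
        = fun z => b * deriv h (σ * Real.sqrt s * z + b * s)
          + σ^2/2 * deriv (deriv h) (σ * Real.sqrt s * z + b * s) from rfl]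
      rw [integral_add (hintψ.const_mul b) (hintψ2.const_mul _), MeasureTheory.integral_const_mul,
        MeasureTheory.integral_const_mul]
    rw [hrhs]
    rw [show σ * (1/(2*Real.sqrt s))
        * ((∫ z, deriv (deriv h) (σ * Real.sqrt s * z + b * s) ∂(gaussianReal 0 1))
          * (σ * Real.sqrt s))
      = (σ * (1/(2*Real.sqrt s)) * (σ * Real.sqrt s))
        * (∫ z, deriv (deriv h) (σ * Real.sqrt s * z + b * s) ∂(gaussianReal 0 1)) by ring,
      hcoef]
  rw [hval] at hD2
  exact hD2

lemma iteratedDeriv_add' {f g : ℝ → ℝ} {i : ℕ} (hf : ContDiff ℝ i f) (hg : ContDiff ℝ i g)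
    (x : ℝ) :
    iteratedDeriv i (fun y => f y + g y) x = iteratedDeriv i f x + iteratedDeriv i g x := by
  rw [← iteratedDerivWithin_univ, ← iteratedDerivWithin_univ, ← iteratedDerivWithin_univ]
  exact iteratedDerivWithin_add (mem_univ x) uniqueDiffOn_univ hf.contDiffWithinAt hg.contDiffWithinAt

lemma iteratedDeriv_cmul {f : ℝ → ℝ} {i : ℕ} (hf : ContDiff ℝ i f) (a x : ℝ) :
    iteratedDeriv i (fun y => a * f y) x = a * iteratedDeriv i f x := by
  rw [← iteratedDerivWithin_univ, ← iteratedDerivWithin_univ]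
  exact iteratedDerivWithin_const_mul (mem_univ x) uniqueDiffOn_univ a hf.contDiffWithinAt

lemma iteratedDeriv_two' (f : ℝ → ℝ) : iteratedDeriv 2 f = deriv (deriv f) := by
  rw [iteratedDeriv_succ', iteratedDeriv_one]

lemma driftGen_reg (b σ : ℝ) {h : ℝ → ℝ} {m : ℕ} (hh : ContDiff ℝ (m+2 : ℕ) h)
    {M c : ℝ} (hM : 0 ≤ M)
    (hb : ∀ i ≤ m+2, ∀ y, |iteratedDeriv i h y| ≤ M * Real.exp (c * |y|)) :
    ContDiff ℝ (m : ℕ) (driftGen b σ h)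
    ∧ ∀ i ≤ m, ∀ y, |iteratedDeriv i (driftGen b σ h) y|
        ≤ ((|b| + σ^2/2) * M) * Real.exp (c * |y|) := by
  have h1 : ContDiff ℝ ((m+1 : ℕ) : ℕ) (deriv h) := hh.iterate_deriv' (m+1) 1
  have h2 : ContDiff ℝ (m : ℕ) (deriv (deriv h)) := hh.iterate_deriv' m 2
  have hle : ((m : ℕ) : WithTop ℕ∞) ≤ ((m+1 : ℕ) : WithTop ℕ∞) := by
    exact_mod_cast Nat.cast_le.mpr (Nat.le_succ m)
  have h1' : ContDiff ℝ (m : ℕ) (deriv h) := h1.of_le hle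
  constructor
  · exact (contDiff_const.mul h1').add (contDiff_const.mul h2)
  · intro i hi y
    have hile : ((i : ℕ) : WithTop ℕ∞) ≤ ((m : ℕ) : WithTop ℕ∞) := by
      exact_mod_cast Nat.cast_le.mpr hi
    have hC1 : ContDiff ℝ (i : ℕ) (deriv h) := h1'.of_le hile
    have hC2 : ContDiff ℝ (i : ℕ) (deriv (deriv h)) := h2.of_le hile
    have e : iteratedDeriv i (driftGen b σ h) y
        = b * iteratedDeriv (i+1) h y + σ^2/2 * iteratedDeriv (i+2) h y := by
      rw [show driftGen b σ h
        = fun x => b * deriv h x + σ^2/2 * deriv (deriv h) x from rfl]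
      rw [iteratedDeriv_add' (contDiff_const.mul hC1) (contDiff_const.mul hC2) y,
        iteratedDeriv_cmul hC1 b y, iteratedDeriv_cmul hC2 (σ^2/2) y]
      rw [show iteratedDeriv (i+1) h = iteratedDeriv i (deriv h) from iteratedDeriv_succ' ..]
      rw [show iteratedDeriv (i+2) h = iteratedDeriv i (deriv (deriv h)) by
        rw [show i+2 = (i+1)+1 from rfl, iteratedDeriv_succ', iteratedDeriv_succ']]
    rw [e]
    have hBe : (0:ℝ) ≤ Real.exp (c * |y|) := Real.exp_nonneg _
    calc |b * iteratedDeriv (i+1) h y + σ^2/2 * iteratedDeriv (i+2) h y|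
        ≤ |b * iteratedDeriv (i+1) h y| + |σ^2/2 * iteratedDeriv (i+2) h y| := abs_add_le _ _
      _ = |b| * |iteratedDeriv (i+1) h y| + σ^2/2 * |iteratedDeriv (i+2) h y| := by
          rw [abs_mul, abs_mul, abs_of_nonneg (by positivity : (0:ℝ) ≤ σ^2/2)]
      _ ≤ |b| * (M * Real.exp (c * |y|)) + σ^2/2 * (M * Real.exp (c * |y|)) := by
          have := hb (i+1) (by omega) y
          have := hb (i+2) (by omega) y
          have h3 := mul_le_mul_of_nonneg_left (hb (i+1) (by omega) y) (abs_nonneg b)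
          have h4 := mul_le_mul_of_nonneg_left (hb (i+2) (by omega) y)
            (by positivity : (0:ℝ) ≤ σ^2/2)
          linarith
      _ = ((|b| + σ^2/2) * M) * Real.exp (c * |y|) := by ring

/-- Iterated Dynkin expansion for Brownian motion with drift: for `g ∈ C^{2n+2}` with
exponentially bounded derivatives,
`∫ g d𝒩(bt, σ²t) = g(0) + Σ_{k=1}^n (t^k/k!) L^k g(0)
  + (t^{n+1}/n!) ∫₀¹ (1-α)^n ∫ L^{n+1} g d𝒩(bαt, σ²αt) dα`. -/
theorem iterated_dynkin_gaussian
    (b σ : ℝ) (hσ : 0 ≤ σ) (n : ℕ) (g : ℝ → ℝ)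
    (hg : ContDiff ℝ (2 * n + 2 : ℕ) g)
    (hbound : ∃ M c : ℝ, 0 < c ∧ ∀ i ≤ 2 * n + 2, ∀ y : ℝ,
      |iteratedDeriv i g y| ≤ M * Real.exp (c * |y|)) :
    ∀ t : ℝ, 0 < t →
      ∫ x, g x ∂(gaussianReal (b * t) (σ ^ 2 * t).toNNReal) =
        g 0 + ∑ k ∈ Finset.Icc 1 n, t ^ k / (Nat.factorial k) * (driftGen b σ)^[k] g 0 +
          t ^ (n + 1) / (Nat.factorial n) *
            ∫ α in (0 : ℝ)..1, (1 - α) ^ n *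
              ∫ x, (driftGen b σ)^[n + 1] g x
                ∂(gaussianReal (b * (α * t)) (σ ^ 2 * (α * t)).toNNReal) := by
  obtain ⟨M, c, hc, hbound⟩ := hbound
  intro t ht
  have hM : 0 ≤ M := by
    have h0 := hbound 0 (by omega) 0
    simp only [iteratedDeriv_zero, abs_zero, mul_zero, Real.exp_zero, mul_one] at h0
    exact le_trans (abs_nonneg _) h0
  set L := driftGen b σ with hLdef
  -- regularity of the iterates
  have main : ∀ k, k ≤ n+1 → ContDiff ℝ ((2*n+2 - 2*k : ℕ)) (L^[k] g)
      ∧ ∀ i ≤ 2*n+2 - 2*k, ∀ y, |iteratedDeriv i (L^[k] g) y|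
          ≤ ((|b| + σ^2/2)^k * M) * Real.exp (c * |y|) := by
    intro k
    induction k with
    | zero =>
      intro _
      constructor
      · simpa using hg
      · intro i hi y
        simpa using hbound i (by omega) y
    | succ k ih =>
      intro hk1
      have hk : k ≤ n+1 := by omega
      obtain ⟨ihC, ihB⟩ := ih hk
      have harith : (2*n+2 - 2*(k+1)) + 2 = 2*n+2 - 2*k := by omega
      have ihC' : ContDiff ℝ (((2*n+2 - 2*(k+1)) + 2 : ℕ)) (L^[k] g) := by
        rw [harith]; exact ihC
      have ihB' : ∀ i ≤ (2*n+2 - 2*(k+1)) + 2, ∀ y, |iteratedDeriv i (L^[k] g) y|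
          ≤ ((|b| + σ^2/2)^k * M) * Real.exp (c * |y|) := fun i hi y =>
        ihB i (by omega) y
      have hreg := driftGen_reg b σ ihC' (by positivity) ihB'
      rw [Function.iterate_succ_apply']
      refine ⟨hreg.1, fun i hi y => ?_⟩
      calc |iteratedDeriv i (driftGen b σ (L^[k] g)) y|
          ≤ ((|b| + σ^2/2) * ((|b| + σ^2/2)^k * M)) * Real.exp (c * |y|) := hreg.2 i hi y
        _ = ((|b| + σ^2/2)^(k+1) * M) * Real.exp (c * |y|) := by rw [pow_succ]; ring
  -- continuity of the Phi's
  have contPhi : ∀ k, k ≤ n+1 → ContinuousOn (Phi b σ (L^[k] g)) (Ici 0) := by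
    intro k hk
    exact Phi_continuousOn b σ hσ (M := (|b| + σ^2/2)^k * M) (c := c)
      ((main k hk).1.continuous) (by positivity) hc.le
      (fun y => by simpa using (main k hk).2 0 (by omega) y)
  -- the Dynkin derivative
  have derivPhi : ∀ k, k ≤ n → ∀ s : ℝ, 0 < s →
      HasDerivAt (Phi b σ (L^[k] g)) (Phi b σ (L^[k+1] g) s) s := by
    intro k hk s hs
    have hk1 : k ≤ n+1 := by omega
    have haux : (2:ℕ) ≤ 2*n+2 - 2*k := by omega
    have h2le : ((2 : ℕ) : WithTop ℕ∞) ≤ ((2*n+2 - 2*k : ℕ) : WithTop ℕ∞) := by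
      exact_mod_cast Nat.cast_le.mpr haux
    have hC2 : ContDiff ℝ 2 (L^[k] g) := by
      have := (main k hk1).1.of_le h2le
      exact_mod_cast this
    have hb0 : ∀ y, |(L^[k] g) y| ≤ ((|b| + σ^2/2)^k * M) * Real.exp (c * |y|) :=
      fun y => by simpa using (main k hk1).2 0 (by omega) y
    have hb1 : ∀ y, |deriv (L^[k] g) y| ≤ ((|b| + σ^2/2)^k * M) * Real.exp (c * |y|) :=
      fun y => by
        have := (main k hk1).2 1 (by omega) y
        rwa [iteratedDeriv_one] at this
    have hb2 : ∀ y, |deriv (deriv (L^[k] g)) y|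
        ≤ ((|b| + σ^2/2)^k * M) * Real.exp (c * |y|) :=
      fun y => by
        have := (main k hk1).2 2 (by omega) y
        rwa [iteratedDeriv_two'] at this
    have hres := Phi_hasDerivAt b σ hσ hC2 (by positivity) hc.le hb0 hb1 hb2 hs
    rw [Function.iterate_succ_apply']
    exact hres
  -- Taylor expansion with integral remainder, by induction
  have expand : ∀ m, m ≤ n → Phi b σ g t
      = (∑ k ∈ Finset.range (m+1), t^k / (Nat.factorial k) * (L^[k] g) 0)
        + t^(m+1) / (Nat.factorial m)
          * ∫ α in (0:ℝ)..1, (1-α)^m * Phi b σ (L^[m+1] g) (α*t) := by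
    intro m
    induction m with
    | zero =>
      intro _
      have hcont0 : ContinuousOn (Phi b σ g) (Icc 0 t) := by
        have := (contPhi 0 (by omega)).mono (Icc_subset_Ici_self : Icc (0:ℝ) t ⊆ Ici 0)
        simpa using this
      have hderiv0 : ∀ s ∈ Ioo 0 t, HasDerivWithinAt (Phi b σ g)
          (Phi b σ (L^[1] g) s) (Ioi s) s := by
        intro s hs
        have := (derivPhi 0 (by omega) s hs.1).hasDerivWithinAt (s := Ioi s)
        simpa using this
      have hii : IntervalIntegrable (fun s => Phi b σ (L^[1] g) s) volume 0 t := by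
        apply ContinuousOn.intervalIntegrable
        rw [uIcc_of_le ht.le]
        exact (contPhi 1 (by omega)).mono Icc_subset_Ici_self
      have hftc := intervalIntegral.integral_eq_sub_of_hasDeriv_right_of_le ht.le
        hcont0 hderiv0 hii
      have hsubst := intervalIntegral.integral_comp_mul_right
        (a := (0:ℝ)) (b := 1) (fun s => Phi b σ (L^[1] g) s) ht.ne'
      rw [zero_mul, one_mul, smul_eq_mul] at hsubst
      beta_reduce at hsubst
      simp only [zero_add, Finset.sum_range_one, pow_zero, pow_one, Nat.factorial_zero,
        Nat.cast_one, Function.iterate_zero_apply, one_mul, div_one]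
      rw [hsubst, hftc, Phi_zero]
      field_simp
      ring
    | succ m ihm =>
      intro hm1
      have hm : m ≤ n := by omega
      have key : ∫ α in (0:ℝ)..1, (1-α)^m * Phi b σ (L^[m+1] g) (α*t)
          = (L^[m+1] g) 0 / ((m:ℝ)+1)
            + (t/((m:ℝ)+1)) * ∫ α in (0:ℝ)..1, (1-α)^(m+1) * Phi b σ (L^[m+2] g) (α*t) := by
        have hmap : MapsTo (fun α : ℝ => α * t) (Icc 0 1) (Ici 0) :=
          fun α hα => mul_nonneg hα.1 ht.le
        have c1 : ContinuousOn (fun α : ℝ => Phi b σ (L^[m+1] g) (α*t)) (Icc 0 1) :=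
          (contPhi (m+1) (by omega)).comp (Continuous.continuousOn (by fun_prop)) hmap
        have c2 : ContinuousOn (fun α : ℝ => Phi b σ (L^[m+2] g) (α*t)) (Icc 0 1) :=
          (contPhi (m+2) (by omega)).comp (Continuous.continuousOn (by fun_prop)) hmap
        have hm0 : ((m:ℝ)+1) ≠ 0 := by positivity
        set G : ℝ → ℝ := fun α => -((1-α)^(m+1)/((m:ℝ)+1)) * Phi b σ (L^[m+1] g) (α * t)
          with hGdef
        have hGderiv : ∀ α ∈ Ioo (0:ℝ) 1, HasDerivAt G
            ((1-α)^m * Phi b σ (L^[m+1] g) (α*t)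
              - ((1-α)^(m+1)/((m:ℝ)+1)) * (t * Phi b σ (L^[m+2] g) (α*t))) α := by
          intro α hα
          have hαt : 0 < α * t := mul_pos hα.1 ht
          have hinner : HasDerivAt (fun α : ℝ => α * t) t α := by
            simpa using (hasDerivAt_id α).mul_const t
          have hPhi := (derivPhi (m+1) (by omega) (α*t) hαt).comp α hinner
          have hq : HasDerivAt (fun α : ℝ => -((1-α)^(m+1)/((m:ℝ)+1))) ((1-α)^m) α := by
            have hin : HasDerivAt (fun α : ℝ => 1 - α) (-1) α := (hasDerivAt_id α).const_sub 1
            have hp := (hasDerivAt_pow (m+1) (1-α)).comp α hin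
            have hfin := (hp.div_const ((m:ℝ)+1)).neg
            refine hfin.congr_deriv ?_
            push_cast [Nat.add_sub_cancel]
            field_simp
          have := hq.mul hPhi
          refine this.congr_deriv ?_
          simp only [Function.comp_apply]
          ring
        have hGcont : ContinuousOn G (Icc 0 1) :=
          (Continuous.continuousOn (by fun_prop)).mul c1
        have i1 : IntervalIntegrable (fun α : ℝ => (1-α)^m * Phi b σ (L^[m+1] g) (α*t))
            volume 0 1 := by
          apply ContinuousOn.intervalIntegrable
          rw [uIcc_of_le zero_le_one]
          exact (Continuous.continuousOn (by fun_prop)).mul c1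
        have i2 : IntervalIntegrable
            (fun α : ℝ => ((1-α)^(m+1)/((m:ℝ)+1)) * (t * Phi b σ (L^[m+2] g) (α*t)))
            volume 0 1 := by
          apply ContinuousOn.intervalIntegrable
          rw [uIcc_of_le zero_le_one]
          exact (Continuous.continuousOn (by fun_prop)).mul (c2.const_smul t)
        have hftc2 := intervalIntegral.integral_eq_sub_of_hasDeriv_right_of_le zero_le_one
          hGcont (fun α hα => (hGderiv α hα).hasDerivWithinAt) (i1.sub i2)
        rw [intervalIntegral.integral_sub i1 i2] at hftc2
        have hG1 : G 1 = 0 := by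
          rw [hGdef]
          norm_num
        have hG0 : G 0 = -(1/((m:ℝ)+1)) * (L^[m+1] g) 0 := by
          rw [hGdef]
          norm_num [Phi_zero]
        have hsecond : ∫ α in (0:ℝ)..1, ((1-α)^(m+1)/((m:ℝ)+1)) * (t * Phi b σ (L^[m+2] g) (α*t))
            = (t/((m:ℝ)+1)) * ∫ α in (0:ℝ)..1, (1-α)^(m+1) * Phi b σ (L^[m+2] g) (α*t) := by
          rw [show (fun α : ℝ => ((1-α)^(m+1)/((m:ℝ)+1)) * (t * Phi b σ (L^[m+2] g) (α*t)))
            = fun α : ℝ => (t/((m:ℝ)+1)) * ((1-α)^(m+1) * Phi b σ (L^[m+2] g) (α*t)) from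
            funext fun α => by ring]
          exact intervalIntegral.integral_const_mul _ _
        rw [hsecond, hG1, hG0] at hftc2
        linear_combination hftc2
      have hP := ihm hm
      rw [key] at hP
      rw [Finset.sum_range_succ]
      have hfac : ((Nat.factorial (m+1) : ℝ)) = ((m:ℝ)+1) * (Nat.factorial m : ℝ) := by
        rw [Nat.factorial_succ]; push_cast; ring
      have hfacne : ((Nat.factorial m : ℝ)) ≠ 0 := Nat.cast_ne_zero.mpr (Nat.factorial_ne_zero m)
      have hm0 : ((m:ℝ)+1) ≠ 0 := by positivity
      rw [hP, hfac]
      have hidx : L^[m+1+1] = L^[m+2] := rfl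
      field_simp
      ring
  -- conclude
  have hfinal := expand n le_rfl
  have hins : Finset.range (n+1) = insert 0 (Finset.Icc 1 n) := by
    ext k
    simp [Nat.lt_succ_iff]
    omega
  rw [hins, Finset.sum_insert (by simp)] at hfinal
  simp only [pow_zero, Nat.factorial_zero, Nat.cast_one, Function.iterate_zero_apply,
    one_mul, div_one] at hfinal
  exact hfinal
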